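/- For a self-adjoint matrix A = [[x₁₁, x₁₂+jy₁₂],[x₁₂−jy₁₂, x₂₂]] over 𝔾 with Δ := (x₁₁−x₂₂)² + 4x₁₂² − 4y₁₂² > 0, A has exactly four eigenvalues in 𝔾: (x₁₁+x₂₂ ± √Δ)/2 and (x₁₁+x₂₂ ± j√Δ)/2, and exactly two of them are real. -/
import Mathlib


/-- Multiplication of hyperbolic (split-complex) numbers. -/
def gmul (z w : ℝ × ℝ) : ℝ × ℝ := (z.1 * w.1 + z.2 * w.2, z.1 * w.2 + z.2 * w.1)

/-- Determinant of a 2×2 matrix over the hyperbolic numbers. -/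
def det2 (A : Matrix (Fin 2) (Fin 2) (ℝ × ℝ)) : ℝ × ℝ :=
  gmul (A 0 0) (A 1 1) - gmul (A 0 1) (A 1 0)

/-- A self-adjoint hyperbolic 2×2 matrix with positive discriminant
`Δ = (x₁₁−x₂₂)² + 4x₁₂² − 4y₁₂²` has exactly four eigenvalues
`(x₁₁+x₂₂ ± √Δ)/2` and `(x₁₁+x₂₂ ± j√Δ)/2`, exactly two of which are real. -/
theorem selfadjoint_four_eigenvalues (x11 x12 y12 x22 : ℝ)
    (hΔ : 0 < (x11 - x22) ^ 2 + 4 * x12 ^ 2 - 4 * y12 ^ 2) :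
    let A : Matrix (Fin 2) (Fin 2) (ℝ × ℝ) :=
      !![(x11, 0), (x12, y12); (x12, -y12), (x22, 0)]
    let Δ : ℝ := (x11 - x22) ^ 2 + 4 * x12 ^ 2 - 4 * y12 ^ 2
    let t : ℝ := x11 + x22
    let l1 : ℝ × ℝ := ((t + Real.sqrt Δ) / 2, 0)
    let l2 : ℝ × ℝ := ((t - Real.sqrt Δ) / 2, 0)
    let l3 : ℝ × ℝ := (t / 2, Real.sqrt Δ / 2)
    let l4 : ℝ × ℝ := (t / 2, -Real.sqrt Δ / 2)
    (∀ lam : ℝ × ℝ,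
        det2 (fun i j => A i j - if i = j then lam else (0, 0)) = (0, 0) ↔
          lam = l1 ∨ lam = l2 ∨ lam = l3 ∨ lam = l4) ∧
    [l1, l2, l3, l4].Pairwise (· ≠ ·) ∧
    l1.2 = 0 ∧ l2.2 = 0 ∧ l3.2 ≠ 0 ∧ l4.2 ≠ 0 := by
  intro A Δ t l1 l2 l3 l4
  have hA : A = !![(x11, 0), (x12, y12); (x12, -y12), (x22, 0)] := rfl
  have hΔ' : Δ = (x11 - x22) ^ 2 + 4 * x12 ^ 2 - 4 * y12 ^ 2 := rfl
  have ht : t = x11 + x22 := rfl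
  have hl1 : l1 = ((t + Real.sqrt Δ) / 2, 0) := rfl
  have hl2 : l2 = ((t - Real.sqrt Δ) / 2, 0) := rfl
  have hl3 : l3 = (t / 2, Real.sqrt Δ / 2) := rfl
  have hl4 : l4 = (t / 2, -Real.sqrt Δ / 2) := rfl
  clear_value A Δ t l1 l2 l3 l4
  subst hA hl1 hl2 hl3 hl4 ht hΔ'
  set s : ℝ := Real.sqrt ((x11 - x22) ^ 2 + 4 * x12 ^ 2 - 4 * y12 ^ 2) with hsdef
  have hs : s ^ 2 = (x11 - x22) ^ 2 + 4 * x12 ^ 2 - 4 * y12 ^ 2 := Real.sq_sqrt hΔ.le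
  have hs0 : 0 < s := Real.sqrt_pos.mpr hΔ
  clear_value s
  refine ⟨?_, ?_, rfl, rfl, by positivity, by simp only; intro h; nlinarith⟩
  · rintro ⟨a, b⟩
    simp only [det2, gmul, Matrix.cons_val', Matrix.cons_val_zero,
      Matrix.cons_val_one, Matrix.head_cons, Matrix.empty_val', Matrix.cons_val_fin_one,
      Matrix.head_fin_const, Matrix.of_apply, Fin.isValue, Prod.mk_sub_mk, Prod.mk.injEq,
      Prod.ext_iff]
    norm_num
    constructor
    · rintro ⟨h1, h2⟩
      have h2' : b * (x11 + x22 - 2 * a) = 0 := by linear_combination -h2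
      rcases mul_eq_zero.mp h2' with hb | ha
      · subst hb
        have key : (2 * a - (x11 + x22) - s) * (2 * a - (x11 + x22) + s) = 0 := by
          linear_combination 4 * h1 - hs
        rcases mul_eq_zero.mp key with h | h
        · exact Or.inl ⟨by linarith, rfl⟩
        · exact Or.inr (Or.inl ⟨by linarith, rfl⟩)
      · have ha' : a = (x11 + x22) / 2 := by linarith
        have key : (2 * b - s) * (2 * b + s) = 0 := by
          linear_combination 4 * h1 - hs - (x11 + x22 - 2 * a) * ha
        rcases mul_eq_zero.mp key with h | h
        · exact Or.inr (Or.inr (Or.inl ⟨ha', by linarith⟩))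
        · exact Or.inr (Or.inr (Or.inr ⟨ha', by linarith⟩))
    · rintro (⟨rfl, rfl⟩ | ⟨rfl, rfl⟩ | ⟨rfl, rfl⟩ | ⟨rfl, rfl⟩) <;>
        constructor <;> first | ring1 | linear_combination hs / 4
  · have h12 : ((x11 + x22 + s) / 2, (0:ℝ)) ≠ ((x11 + x22 - s) / 2, 0) := fun h => by
      have := congrArg Prod.fst h; simp only at this; nlinarith
    have h13 : ((x11 + x22 + s) / 2, (0:ℝ)) ≠ ((x11 + x22) / 2, s / 2) := fun h => by
      have := congrArg Prod.snd h; simp only at this; nlinarith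
    have h14 : ((x11 + x22 + s) / 2, (0:ℝ)) ≠ ((x11 + x22) / 2, -s / 2) := fun h => by
      have := congrArg Prod.snd h; simp only at this; nlinarith
    have h23 : ((x11 + x22 - s) / 2, (0:ℝ)) ≠ ((x11 + x22) / 2, s / 2) := fun h => by
      have := congrArg Prod.snd h; simp only at this; nlinarith
    have h24 : ((x11 + x22 - s) / 2, (0:ℝ)) ≠ ((x11 + x22) / 2, -s / 2) := fun h => by
      have := congrArg Prod.snd h; simp only at this; nlinarith
    have h34 : ((x11 + x22) / 2, s / 2) ≠ ((x11 + x22) / 2, -s / 2) := fun h => by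
      have := congrArg Prod.snd h; simp only at this; nlinarith
    simp [List.pairwise_cons, h12, h13, h14, h23, h24, h34]
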